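/- Let σ be a Borel measure on (0,∞) with ∫₀^∞ (r² ∧ 1) σ(dr) < ∞. Define ℓ(s) = ∫_{(s,∞)} r^{-1} σ(dr) for s > 0 and h(u) = e^{-u} ∫_{e^u}^∞ ℓ(s) ds for u ∈ ℝ. Then h is finite and absolutely continuous on ℝ, and for all u₁ ≤ u₂, h(u₁) − h(u₂) = ∫_{u₁}^{u₂} e^{-u} σ((e^u, ∞)) du; in particular, for a.e. u ∈ ℝ, −h'(u) = e^{-u} σ((e^u, ∞)). -/

import Mathlib

open MeasureTheory
open scoped ENNReal



namespace Stmt14Aux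

lemma fin_Ioi (σ : Measure ℝ)
    (hσfin : ∫⁻ r, ENNReal.ofReal (min (r ^ 2) 1) ∂σ < ⊤)
    {t : ℝ} (ht : 0 < t) : σ (Set.Ioi t) < ⊤ := by
  have hmin : (0:ℝ) < min (t ^ 2) 1 := lt_min (by positivity) one_pos
  have key : ENNReal.ofReal (min (t ^ 2) 1) * σ (Set.Ioi t)
      ≤ ∫⁻ r, ENNReal.ofReal (min (r ^ 2) 1) ∂σ := by
    rw [← setLIntegral_const (Set.Ioi t) (ENNReal.ofReal (min (t ^ 2) 1))]
    refine le_trans (setLIntegral_mono' measurableSet_Ioi fun r hr => ?_)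
      (setLIntegral_le_lintegral _ _)
    have hr' : t < r := hr
    exact ENNReal.ofReal_le_ofReal (min_le_min (by nlinarith) le_rfl)
  by_contra hcon
  rw [not_lt, top_le_iff] at hcon
  rw [hcon, ENNReal.mul_top (ENNReal.ofReal_pos.mpr hmin).ne'] at key
  exact absurd (lt_of_le_of_lt key hσfin) (lt_irrefl _)

lemma sf_restrict (σ : Measure ℝ)
    (hσfin : ∫⁻ r, ENNReal.ofReal (min (r ^ 2) 1) ∂σ < ⊤) :
    SigmaFinite (σ.restrict (Set.Ioi (0:ℝ))) := by
  refine ⟨⟨⟨fun n => Set.Ioi (1 / (n + 1) : ℝ) ∪ Set.Iic 0, fun n => trivial, fun n => ?_, ?_⟩⟩⟩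
  · refine lt_of_le_of_lt (measure_union_le _ _) ?_
    have h1 : (σ.restrict (Set.Ioi (0:ℝ))) (Set.Ioi (1 / (n + 1) : ℝ)) < ⊤ :=
      lt_of_le_of_lt (Measure.restrict_apply_le _ _) (fin_Ioi σ hσfin (by positivity))
    have h2 : (σ.restrict (Set.Ioi (0:ℝ))) (Set.Iic 0) = 0 := by
      rw [Measure.restrict_apply measurableSet_Iic]
      have : Set.Iic (0:ℝ) ∩ Set.Ioi 0 = ∅ := by
        ext x; simp only [Set.mem_inter_iff, Set.mem_Iic, Set.mem_Ioi, Set.mem_empty_iff_false,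
          iff_false, not_and, not_lt]
        exact fun h => h
      rw [this, measure_empty]
    rw [h2]
    simpa using h1
  · rw [Set.eq_univ_iff_forall]
    intro x
    simp only [Set.mem_iUnion, Set.mem_union, Set.mem_Ioi, Set.mem_Iic]
    rcases le_or_gt x 0 with hx | hx
    · exact ⟨0, Or.inr hx⟩
    · obtain ⟨n, hn⟩ := exists_nat_one_div_lt hx
      exact ⟨n, Or.inl hn⟩

end Stmt14Aux



namespace Stmt14AuxB

lemma G_repr (σ : Measure ℝ) [SigmaFinite (σ.restrict (Set.Ioi (0:ℝ)))]
    {t : ℝ} (ht : 0 < t) :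
    ∫⁻ s in Set.Ioi t, ∫⁻ r in Set.Ioi s, ENNReal.ofReal r⁻¹ ∂σ =
      ∫⁻ r in Set.Ioi (0:ℝ), ENNReal.ofReal r⁻¹ * ENNReal.ofReal (r - t) ∂σ := by
  have h1 : ∀ s ∈ Set.Ioi t, (∫⁻ r in Set.Ioi s, ENNReal.ofReal r⁻¹ ∂σ) =
      ∫⁻ r in Set.Ioi (0:ℝ), Set.indicator {p : ℝ × ℝ | p.1 < p.2}
        (fun p => ENNReal.ofReal p.2⁻¹) (s, r) ∂σ := by
    intro s hs
    have hs0 : (0:ℝ) ≤ s := le_of_lt (lt_trans ht hs)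
    have hrr : (σ.restrict (Set.Ioi (0:ℝ))).restrict (Set.Ioi s) = σ.restrict (Set.Ioi s) := by
      rw [Measure.restrict_restrict measurableSet_Ioi,
        Set.inter_eq_self_of_subset_left (Set.Ioi_subset_Ioi hs0)]
    calc ∫⁻ r in Set.Ioi s, ENNReal.ofReal r⁻¹ ∂σ
        = ∫⁻ r in Set.Ioi s, ENNReal.ofReal r⁻¹ ∂(σ.restrict (Set.Ioi (0:ℝ))) := by rw [hrr]
      _ = ∫⁻ r, (Set.Ioi s).indicator (fun r => ENNReal.ofReal r⁻¹) r
            ∂(σ.restrict (Set.Ioi (0:ℝ))) := (lintegral_indicator measurableSet_Ioi _).symm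
      _ = ∫⁻ r in Set.Ioi (0:ℝ), Set.indicator {p : ℝ × ℝ | p.1 < p.2}
            (fun p => ENNReal.ofReal p.2⁻¹) (s, r) ∂σ := by
          refine lintegral_congr fun r => ?_
          by_cases h : s < r <;> simp [Set.indicator_apply, h]
  rw [setLIntegral_congr_fun measurableSet_Ioi h1]
  have hmeas : Measurable (Function.uncurry fun (s r : ℝ) =>
      Set.indicator {p : ℝ × ℝ | p.1 < p.2} (fun p => ENNReal.ofReal p.2⁻¹) (s, r)) :=
    Measurable.indicator (measurable_snd.inv.ennreal_ofReal)
      (measurableSet_lt measurable_fst measurable_snd)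
  rw [lintegral_lintegral_swap hmeas.aemeasurable]
  refine lintegral_congr fun r => ?_
  calc ∫⁻ s in Set.Ioi t, Set.indicator {p : ℝ × ℝ | p.1 < p.2}
        (fun p => ENNReal.ofReal p.2⁻¹) (s, r)
      = ∫⁻ s in Set.Ioi t, (Set.Iio r).indicator (fun _ => ENNReal.ofReal r⁻¹) s := by
        refine lintegral_congr fun s => ?_
        by_cases h : s < r <;> simp [Set.indicator_apply, h]
    _ = ENNReal.ofReal r⁻¹ * (volume.restrict (Set.Ioi t)) (Set.Iio r) :=
        lintegral_indicator_const measurableSet_Iio _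
    _ = ENNReal.ofReal r⁻¹ * ENNReal.ofReal (r - t) := by
        rw [Measure.restrict_apply measurableSet_Iio]
        congr 1
        rw [show Set.Iio r ∩ Set.Ioi t = Set.Ioo t r from by
          ext x; simp only [Set.mem_inter_iff, Set.mem_Iio, Set.mem_Ioi, Set.mem_Ioo]; tauto,
          Real.volume_Ioo]

lemma H_repr (σ : Measure ℝ) [SigmaFinite (σ.restrict (Set.Ioi (0:ℝ)))] (u : ℝ) :
    ENNReal.ofReal (Real.exp (-u)) *
        ∫⁻ s in Set.Ioi (Real.exp u), ∫⁻ r in Set.Ioi s, ENNReal.ofReal r⁻¹ ∂σ =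
      ∫⁻ r in Set.Ioi (0:ℝ), ENNReal.ofReal (Real.exp (-u) - r⁻¹) ∂σ := by
  rw [G_repr σ (Real.exp_pos u),
    ← lintegral_const_mul (ENNReal.ofReal (Real.exp (-u)))
      (f := fun r : ℝ => ENNReal.ofReal r⁻¹ * ENNReal.ofReal (r - Real.exp u))
      ((measurable_inv.ennreal_ofReal).mul ((measurable_id.sub measurable_const).ennreal_ofReal))]
  refine setLIntegral_congr_fun measurableSet_Ioi (fun r hr => ?_)
  have hr0 : (0:ℝ) < r := hr
  rcases le_or_gt r (Real.exp u) with hle | hlt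
  · have h1 : r - Real.exp u ≤ 0 := by linarith
    have h2 : Real.exp (-u) - r⁻¹ ≤ 0 := by
      rw [Real.exp_neg, sub_nonpos]
      exact inv_anti₀ hr0 hle
    simp [ENNReal.ofReal_eq_zero.mpr h1, ENNReal.ofReal_eq_zero.mpr h2]
  · rw [← ENNReal.ofReal_mul (by positivity), ← ENNReal.ofReal_mul (by positivity)]
    congr 1
    rw [Real.exp_neg]
    have h1 : r ≠ 0 := hr0.ne'
    have h2 : Real.exp u ≠ 0 := (Real.exp_pos u).ne'
    field_simp

lemma H_lt_top (σ : Measure ℝ)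
    (hσfin : ∫⁻ r, ENNReal.ofReal (min (r ^ 2) 1) ∂σ < ⊤) (u : ℝ) :
    ∫⁻ r in Set.Ioi (0:ℝ), ENNReal.ofReal (Real.exp (-u) - r⁻¹) ∂σ < ⊤ := by
  have hb : ∀ r ∈ Set.Ioi (0:ℝ), ENNReal.ofReal (Real.exp (-u) - r⁻¹)
      ≤ (Set.Ioi (Real.exp u)).indicator (fun _ => ENNReal.ofReal (Real.exp (-u))) r := by
    intro r hr
    have hr0 : (0:ℝ) < r := hr
    by_cases hlt : Real.exp u < r
    · simp only [Set.indicator_of_mem (Set.mem_Ioi.mpr hlt)]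
      exact ENNReal.ofReal_le_ofReal (sub_le_self _ (inv_nonneg.mpr hr0.le))
    · have hz : Real.exp (-u) - r⁻¹ ≤ 0 := by
        rw [Real.exp_neg, sub_nonpos]
        exact inv_anti₀ hr0 (not_lt.mp hlt)
      simp [ENNReal.ofReal_eq_zero.mpr hz]
  calc ∫⁻ r in Set.Ioi (0:ℝ), ENNReal.ofReal (Real.exp (-u) - r⁻¹) ∂σ
      ≤ ∫⁻ r in Set.Ioi (0:ℝ),
          (Set.Ioi (Real.exp u)).indicator (fun _ => ENNReal.ofReal (Real.exp (-u))) r ∂σ :=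
        setLIntegral_mono' measurableSet_Ioi hb
    _ ≤ ∫⁻ r, (Set.Ioi (Real.exp u)).indicator (fun _ => ENNReal.ofReal (Real.exp (-u))) r ∂σ :=
        setLIntegral_le_lintegral _ _
    _ = ENNReal.ofReal (Real.exp (-u)) * σ (Set.Ioi (Real.exp u)) :=
        lintegral_indicator_const measurableSet_Ioi _
    _ < ⊤ := ENNReal.mul_lt_top ENNReal.ofReal_lt_top (Stmt14Aux.fin_Ioi σ hσfin (Real.exp_pos u))

end Stmt14AuxB

namespace Stmt14AuxC

lemma lint_exp (a b : ℝ) :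
    ∫⁻ u in Set.Ioc a b, ENNReal.ofReal (Real.exp (-u)) =
      ENNReal.ofReal (Real.exp (-a) - Real.exp (-b)) := by
  rcases le_or_gt a b with hab | hba
  · have hint : IntegrableOn (fun u : ℝ => Real.exp (-u)) (Set.Ioc a b) volume :=
      (Real.continuous_exp.comp continuous_neg).integrableOn_Ioc
    rw [← ofReal_integral_eq_lintegral_ofReal hint
      (Filter.Eventually.of_forall fun u => (Real.exp_pos _).le)]
    congr 1
    rw [← intervalIntegral.integral_of_le hab,
      intervalIntegral.integral_comp_neg fun x => Real.exp x, integral_exp]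
  · rw [Set.Ioc_eq_empty (not_lt.mpr hba.le)]
    simp [ENNReal.ofReal_eq_zero.mpr
      (sub_nonpos.mpr (Real.exp_le_exp.mpr (by linarith : -a ≤ -b)))]

lemma inner_piece {u₁ u₂ : ℝ} (c : ℝ) :
    ∫⁻ u in Set.Ioc u₁ u₂, (Set.Iio c).indicator (fun u => ENNReal.ofReal (Real.exp (-u))) u =
      ENNReal.ofReal (Real.exp (-u₁) - Real.exp (-(min u₂ c))) := by
  rw [lintegral_indicator measurableSet_Iio, Measure.restrict_restrict measurableSet_Iio]
  rcases lt_or_ge u₂ c with h | h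
  · have hset : Set.Iio c ∩ Set.Ioc u₁ u₂ = Set.Ioc u₁ u₂ := by
      ext x
      simp only [Set.mem_inter_iff, Set.mem_Iio, Set.mem_Ioc]
      constructor
      · tauto
      · rintro ⟨h1, h2⟩; exact ⟨lt_of_le_of_lt h2 h, h1, h2⟩
    rw [hset, lint_exp, min_eq_left h.le]
  · have hset : Set.Iio c ∩ Set.Ioc u₁ u₂ = Set.Ioo u₁ c := by
      ext x
      simp only [Set.mem_inter_iff, Set.mem_Iio, Set.mem_Ioc, Set.mem_Ioo]
      constructor
      · tauto
      · rintro ⟨h1, h2⟩; exact ⟨h2, h1, h2.le.trans h⟩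
    rw [hset, setLIntegral_congr (Ioo_ae_eq_Ioc (a := u₁) (b := c)), lint_exp,
      min_eq_right h]

lemma swap2 (σ : Measure ℝ)
    (hσfin : ∫⁻ r, ENNReal.ofReal (min (r ^ 2) 1) ∂σ < ⊤)
    [SigmaFinite (σ.restrict (Set.Ioi (0:ℝ)))]
    {u₁ u₂ : ℝ} (h12 : u₁ ≤ u₂) :
    ∫⁻ u in Set.Ioc u₁ u₂, ENNReal.ofReal (Real.exp (-u)) * σ (Set.Ioi (Real.exp u)) =
      (∫⁻ r in Set.Ioi (0:ℝ), ENNReal.ofReal (Real.exp (-u₁) - r⁻¹) ∂σ) -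
        ∫⁻ r in Set.Ioi (0:ℝ), ENNReal.ofReal (Real.exp (-u₂) - r⁻¹) ∂σ := by
  have h1 : ∀ u : ℝ, ENNReal.ofReal (Real.exp (-u)) * σ (Set.Ioi (Real.exp u)) =
      ∫⁻ r in Set.Ioi (0:ℝ), Set.indicator {p : ℝ × ℝ | Real.exp p.1 < p.2}
        (fun p => ENNReal.ofReal (Real.exp (-p.1))) (u, r) ∂σ := by
    intro u
    have hσeq : σ (Set.Ioi (Real.exp u)) = (σ.restrict (Set.Ioi (0:ℝ))) (Set.Ioi (Real.exp u)) := by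
      rw [Measure.restrict_apply measurableSet_Ioi,
        Set.inter_eq_self_of_subset_left (Set.Ioi_subset_Ioi (Real.exp_pos u).le)]
    rw [hσeq, ← lintegral_indicator_const measurableSet_Ioi]
    refine lintegral_congr fun r => ?_
    by_cases hr : Real.exp u < r <;> simp [Set.indicator_apply, hr]
  have hmeas : Measurable (Function.uncurry fun (u r : ℝ) =>
      Set.indicator {p : ℝ × ℝ | Real.exp p.1 < p.2}
        (fun p => ENNReal.ofReal (Real.exp (-p.1))) (u, r)) :=
    Measurable.indicator
      ((Real.continuous_exp.measurable.comp measurable_fst.neg).ennreal_ofReal)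
      (measurableSet_lt (Real.continuous_exp.measurable.comp measurable_fst) measurable_snd)
  calc ∫⁻ u in Set.Ioc u₁ u₂, ENNReal.ofReal (Real.exp (-u)) * σ (Set.Ioi (Real.exp u))
      = ∫⁻ u in Set.Ioc u₁ u₂, ∫⁻ r in Set.Ioi (0:ℝ),
          Set.indicator {p : ℝ × ℝ | Real.exp p.1 < p.2}
            (fun p => ENNReal.ofReal (Real.exp (-p.1))) (u, r) ∂σ := lintegral_congr h1
    _ = ∫⁻ r in Set.Ioi (0:ℝ), (∫⁻ u in Set.Ioc u₁ u₂,
          Set.indicator {p : ℝ × ℝ | Real.exp p.1 < p.2}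
            (fun p => ENNReal.ofReal (Real.exp (-p.1))) (u, r)) ∂σ :=
        lintegral_lintegral_swap hmeas.aemeasurable
    _ = ∫⁻ r in Set.Ioi (0:ℝ), (ENNReal.ofReal (Real.exp (-u₁) - r⁻¹) -
          ENNReal.ofReal (Real.exp (-u₂) - r⁻¹)) ∂σ := by
        refine lintegral_congr_ae ?_
        filter_upwards [ae_restrict_mem measurableSet_Ioi] with r hr
        have hr0 : (0:ℝ) < r := hr
        have hrinv : r⁻¹ = Real.exp (-Real.log r) := by
          rw [Real.exp_neg, Real.exp_log hr0]
        have hpt : ∀ u : ℝ, Set.indicator {p : ℝ × ℝ | Real.exp p.1 < p.2}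
            (fun p => ENNReal.ofReal (Real.exp (-p.1))) (u, r) =
            (Set.Iio (Real.log r)).indicator (fun u => ENNReal.ofReal (Real.exp (-u))) u := by
          intro u
          by_cases hu : Real.exp u < r
          · rw [Set.indicator_of_mem (by exact hu : (u, r) ∈ {p : ℝ × ℝ | Real.exp p.1 < p.2}),
              Set.indicator_of_mem (Set.mem_Iio.mpr ((Real.lt_log_iff_exp_lt hr0).mpr hu))]
          · rw [Set.indicator_of_notMem (by exact hu), Set.indicator_of_notMem
              (by simp only [Set.mem_Iio]; exact fun hc => hu ((Real.lt_log_iff_exp_lt hr0).mp hc))]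
        rw [lintegral_congr hpt, inner_piece]
        rcases le_total (Real.log r) u₂ with h | h
        · have h2 : ENNReal.ofReal (Real.exp (-u₂) - r⁻¹) = 0 :=
            ENNReal.ofReal_eq_zero.mpr (by
              rw [hrinv]
              exact sub_nonpos.mpr (Real.exp_le_exp.mpr (by linarith)))
          rw [h2, tsub_zero, min_eq_right h, ← hrinv]
        · have hq : 0 ≤ Real.exp (-u₂) - r⁻¹ := by
            rw [hrinv]
            exact sub_nonneg.mpr (Real.exp_le_exp.mpr (by linarith))
          rw [min_eq_left h, ← ENNReal.ofReal_sub _ hq]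
          congr 1
          ring
    _ = (∫⁻ r in Set.Ioi (0:ℝ), ENNReal.ofReal (Real.exp (-u₁) - r⁻¹) ∂σ) -
          ∫⁻ r in Set.Ioi (0:ℝ), ENNReal.ofReal (Real.exp (-u₂) - r⁻¹) ∂σ := by
        refine lintegral_sub ((measurable_const.sub measurable_inv).ennreal_ofReal)
          (Stmt14AuxB.H_lt_top σ hσfin u₂).ne
          (Filter.Eventually.of_forall fun r => ENNReal.ofReal_le_ofReal
            (sub_le_sub_right (Real.exp_le_exp.mpr (by linarith)) _))

end Stmt14AuxC

namespace Stmt14AuxD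

noncomputable def gre (σ : Measure ℝ) (u : ℝ) : ℝ :=
  Real.exp (-u) * (σ (Set.Ioi (Real.exp u))).toReal

noncomputable def Hf (σ : Measure ℝ) (u : ℝ) : ℝ≥0∞ :=
  ∫⁻ r in Set.Ioi (0:ℝ), ENNReal.ofReal (Real.exp (-u) - r⁻¹) ∂σ

noncomputable def Ff (σ : Measure ℝ) (u : ℝ) : ℝ :=
  ∫ t in (0:ℝ)..u, gre σ t

lemma measurable_genn (σ : Measure ℝ) :
    Measurable fun u : ℝ => ENNReal.ofReal (Real.exp (-u)) * σ (Set.Ioi (Real.exp u)) :=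
  ((Real.continuous_exp.comp continuous_neg).measurable.ennreal_ofReal).mul
    (Antitone.measurable fun _ _ hab => measure_mono (Set.Ioi_subset_Ioi (Real.exp_le_exp.mpr hab)))

lemma measurable_gre (σ : Measure ℝ) : Measurable (gre σ) :=
  ((Real.continuous_exp.comp continuous_neg).measurable).mul
    ((Antitone.measurable fun _ _ hab =>
      measure_mono (Set.Ioi_subset_Ioi (Real.exp_le_exp.mpr hab))).ennreal_toReal)

lemma genn_ne_top (σ : Measure ℝ)
    (hσfin : ∫⁻ r, ENNReal.ofReal (min (r ^ 2) 1) ∂σ < ⊤) (u : ℝ) :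
    ENNReal.ofReal (Real.exp (-u)) * σ (Set.Ioi (Real.exp u)) ≠ ⊤ :=
  (ENNReal.mul_lt_top ENNReal.ofReal_lt_top (Stmt14Aux.fin_Ioi σ hσfin (Real.exp_pos u))).ne

lemma Hf_le (σ : Measure ℝ) {u₁ u₂ : ℝ} (h12 : u₁ ≤ u₂) : Hf σ u₂ ≤ Hf σ u₁ :=
  lintegral_mono fun r => ENNReal.ofReal_le_ofReal
    (sub_le_sub_right (Real.exp_le_exp.mpr (by linarith)) _)

lemma lintIoc (σ : Measure ℝ)
    (hσfin : ∫⁻ r, ENNReal.ofReal (min (r ^ 2) 1) ∂σ < ⊤)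
    [SigmaFinite (σ.restrict (Set.Ioi (0:ℝ)))] {u₁ u₂ : ℝ} (h12 : u₁ ≤ u₂) :
    ∫⁻ u in Set.Ioc u₁ u₂, ENNReal.ofReal (Real.exp (-u)) * σ (Set.Ioi (Real.exp u)) =
      Hf σ u₁ - Hf σ u₂ :=
  Stmt14AuxC.swap2 σ hσfin h12

lemma intIoc (σ : Measure ℝ)
    (hσfin : ∫⁻ r, ENNReal.ofReal (min (r ^ 2) 1) ∂σ < ⊤)
    [SigmaFinite (σ.restrict (Set.Ioi (0:ℝ)))] {u₁ u₂ : ℝ} (h12 : u₁ ≤ u₂) :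
    (∫ u in Set.Ioc u₁ u₂, gre σ u) = (Hf σ u₁).toReal - (Hf σ u₂).toReal := by
  have h1 : ∀ u : ℝ, gre σ u =
      (ENNReal.ofReal (Real.exp (-u)) * σ (Set.Ioi (Real.exp u))).toReal := by
    intro u
    rw [gre, ENNReal.toReal_mul, ENNReal.toReal_ofReal (Real.exp_nonneg _)]
  calc (∫ u in Set.Ioc u₁ u₂, gre σ u)
      = ∫ u in Set.Ioc u₁ u₂,
          (ENNReal.ofReal (Real.exp (-u)) * σ (Set.Ioi (Real.exp u))).toReal := by
        simp only [h1]
    _ = (∫⁻ u in Set.Ioc u₁ u₂,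
          ENNReal.ofReal (Real.exp (-u)) * σ (Set.Ioi (Real.exp u))).toReal :=
        integral_toReal (measurable_genn σ).aemeasurable
          (Filter.Eventually.of_forall fun u => (genn_ne_top σ hσfin u).lt_top)
    _ = (Hf σ u₁).toReal - (Hf σ u₂).toReal := by
        rw [lintIoc σ hσfin h12,
          ENNReal.toReal_sub_of_le (Hf_le σ h12) (Stmt14AuxB.H_lt_top σ hσfin u₁).ne]

lemma intOn (σ : Measure ℝ)
    (hσfin : ∫⁻ r, ENNReal.ofReal (min (r ^ 2) 1) ∂σ < ⊤)
    [SigmaFinite (σ.restrict (Set.Ioi (0:ℝ)))] (a b : ℝ) :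
    IntegrableOn (gre σ) (Set.Ioc a b) volume := by
  rcases le_or_gt a b with hab | hab
  · refine ⟨(measurable_gre σ).aestronglyMeasurable, ?_⟩
    have hnn : 0 ≤ᵐ[volume.restrict (Set.Ioc a b)] gre σ :=
      Filter.Eventually.of_forall fun u =>
        mul_nonneg (Real.exp_nonneg _) ENNReal.toReal_nonneg
    rw [hasFiniteIntegral_iff_ofReal hnn]
    have h1 : ∀ u : ℝ, ENNReal.ofReal (gre σ u) =
        ENNReal.ofReal (Real.exp (-u)) * σ (Set.Ioi (Real.exp u)) := by
      intro u
      rw [gre, ENNReal.ofReal_mul (Real.exp_nonneg _),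
        ENNReal.ofReal_toReal ((Stmt14Aux.fin_Ioi σ hσfin (Real.exp_pos u)).ne)]
    calc ∫⁻ u in Set.Ioc a b, ENNReal.ofReal (gre σ u)
        = ∫⁻ u in Set.Ioc a b,
            ENNReal.ofReal (Real.exp (-u)) * σ (Set.Ioi (Real.exp u)) := lintegral_congr h1
      _ = Hf σ a - Hf σ b := lintIoc σ hσfin hab
      _ < ⊤ := lt_of_le_of_lt tsub_le_self (Stmt14AuxB.H_lt_top σ hσfin a)
  · rw [Set.Ioc_eq_empty (not_lt.mpr hab.le)]
    exact integrableOn_empty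

lemma II (σ : Measure ℝ)
    (hσfin : ∫⁻ r, ENNReal.ofReal (min (r ^ 2) 1) ∂σ < ⊤)
    [SigmaFinite (σ.restrict (Set.Ioi (0:ℝ)))] (a b : ℝ) :
    IntervalIntegrable (gre σ) volume a b := by
  rw [intervalIntegrable_iff]
  simpa [Set.uIoc] using intOn σ hσfin (min a b) (max a b)

lemma Ff_Ioc (σ : Measure ℝ)
    (hσfin : ∫⁻ r, ENNReal.ofReal (min (r ^ 2) 1) ∂σ < ⊤)
    [SigmaFinite (σ.restrict (Set.Ioi (0:ℝ)))] {a b : ℝ} (hab : a ≤ b) :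
    (∫ u in Set.Ioc a b, gre σ u) = Ff σ b - Ff σ a := by
  rw [← intervalIntegral.integral_of_le hab,
    show Ff σ b = ∫ t in (0:ℝ)..b, gre σ t from rfl,
    show Ff σ a = ∫ t in (0:ℝ)..a, gre σ t from rfl,
    ← intervalIntegral.integral_interval_sub_left (II σ hσfin 0 b) (II σ hσfin 0 a)]

lemma locInt (σ : Measure ℝ)
    (hσfin : ∫⁻ r, ENNReal.ofReal (min (r ^ 2) 1) ∂σ < ⊤)
    [SigmaFinite (σ.restrict (Set.Ioi (0:ℝ)))] :
    LocallyIntegrable (gre σ) volume := fun x =>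
  ⟨Set.Ioc (x - 1) (x + 1), Ioc_mem_nhds (by linarith) (by linarith), intOn σ hσfin _ _⟩

end Stmt14AuxD

namespace Stmt14AuxE
open Stmt14AuxD

lemma hasDeriv_Ff (σ : Measure ℝ)
    (hσfin : ∫⁻ r, ENNReal.ofReal (min (r ^ 2) 1) ∂σ < ⊤)
    [SigmaFinite (σ.restrict (Set.Ioi (0:ℝ)))] :
    ∀ᵐ x : ℝ, HasDerivAt (Ff σ) (gre σ x) x := by
  filter_upwards [IsUnifLocDoublingMeasure.ae_tendsto_average_norm_sub (μ := volume)
    (locInt σ hσfin) 1] with x hx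
  rw [hasDerivAt_iff_isLittleO, Asymptotics.isLittleO_iff]
  intro c hc
  have hδ : Filter.Tendsto (fun y : ℝ => |y - x|) (nhdsWithin x {x}ᶜ)
      (nhdsWithin 0 (Set.Ioi 0)) := by
    rw [tendsto_nhdsWithin_iff]
    constructor
    · have h1 : Filter.Tendsto (fun y : ℝ => |y - x|) (nhds x) (nhds 0) := by
        have h2 := ((continuous_id.sub (continuous_const : Continuous fun _ : ℝ => x)).abs).tendsto x
        simpa using h2
      exact h1.mono_left nhdsWithin_le_nhds
    · filter_upwards [eventually_mem_nhdsWithin] with y hy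
      exact abs_pos.mpr (sub_ne_zero.mpr hy)
  have havg := hx (fun _ : ℝ => x) (fun y : ℝ => |y - x|) hδ
    (Filter.Eventually.of_forall fun y => Metric.mem_closedBall_self (by positivity))
  have hev : ∀ᶠ y in nhdsWithin x {x}ᶜ,
      (⨍ t in Metric.closedBall x |y - x|, ‖gre σ t - gre σ x‖) < c / 2 :=
    havg.eventually (gt_mem_nhds (by linarith))
  rw [eventually_nhdsWithin_iff] at hev
  filter_upwards [hev] with y hy
  rcases eq_or_ne y x with rfl | hyx
  · simp
  · have havg2 : (⨍ t in Metric.closedBall x |y - x|, ‖gre σ t - gre σ x‖) ≤ c / 2 :=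
      (hy (Set.mem_compl_singleton_iff.mpr hyx)).le
    have hd0 : 0 < |y - x| := abs_pos.mpr (sub_ne_zero.mpr hyx)
    have hkey : Ff σ y - Ff σ x - (y - x) • gre σ x = ∫ t in x..y, (gre σ t - gre σ x) := by
      rw [intervalIntegral.integral_sub (II σ hσfin x y) intervalIntegrable_const,
        intervalIntegral.integral_const]
      have h2 : Ff σ y - Ff σ x = ∫ t in x..y, gre σ t := by
        rw [show Ff σ y = ∫ t in (0:ℝ)..y, gre σ t from rfl,
          show Ff σ x = ∫ t in (0:ℝ)..x, gre σ t from rfl,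
          ← intervalIntegral.integral_interval_sub_left (II σ hσfin 0 y) (II σ hσfin 0 x)]
      rw [h2]
    have hIcb : IntegrableOn (fun t => ‖gre σ t - gre σ x‖)
        (Metric.closedBall x |y - x|) volume := by
      rw [Real.closedBall_eq_Icc]
      have h3 := (II σ hσfin (x - |y - x|) (x + |y - x|)).sub
        (intervalIntegrable_const (c := gre σ x))
      rw [intervalIntegrable_iff_integrableOn_Icc_of_le (by linarith)] at h3
      exact h3.norm
    have hsub : Set.uIoc x y ⊆ Metric.closedBall x |y - x| := by
      intro t ht
      rw [Metric.mem_closedBall, Real.dist_eq]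
      rcases le_total x y with hxy | hxy
      · rw [Set.uIoc_of_le hxy] at ht
        have h1 := ht.1
        have h2 := ht.2
        have habs : |y - x| = y - x := abs_of_nonneg (by linarith)
        rw [abs_le, habs]
        constructor <;> linarith
      · rw [Set.uIoc_of_ge hxy] at ht
        have h1 := ht.1
        have h2 := ht.2
        have habs : |y - x| = -(y - x) := abs_of_nonpos (by linarith)
        rw [abs_le, habs]
        constructor <;> linarith
    calc ‖Ff σ y - Ff σ x - (y - x) • gre σ x‖
        = ‖∫ t in x..y, (gre σ t - gre σ x)‖ := by rw [hkey]
      _ ≤ ∫ t in Set.uIoc x y, ‖gre σ t - gre σ x‖ :=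
          intervalIntegral.norm_integral_le_integral_norm_uIoc
      _ ≤ ∫ t in Metric.closedBall x |y - x|, ‖gre σ t - gre σ x‖ :=
          setIntegral_mono_set hIcb (Filter.Eventually.of_forall fun t => norm_nonneg _)
            (HasSubset.Subset.eventuallyLE hsub)
      _ = (2 * |y - x|) * ⨍ t in Metric.closedBall x |y - x|, ‖gre σ t - gre σ x‖ := by
          rw [setAverage_eq, Real.volume_real_closedBall (abs_nonneg _),
            smul_eq_mul, ← mul_assoc, mul_inv_cancel₀ (by positivity), one_mul]
      _ ≤ (2 * |y - x|) * (c / 2) := mul_le_mul_of_nonneg_left havg2 (by positivity)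
      _ = c * ‖y - x‖ := by rw [Real.norm_eq_abs]; ring

end Stmt14AuxE


/-- With `ℓ(s) = ∫_{(s,∞)} r⁻¹ σ(dr)` and `h(u) = e^{-u} ∫_{e^u}^∞ ℓ(s) ds`, the function
`h` is finite and absolutely continuous on `ℝ`, with
`h(u₁) − h(u₂) = ∫_{u₁}^{u₂} e^{-u} σ((e^u,∞)) du` for `u₁ ≤ u₂`; in particular
`−h'(u) = e^{-u} σ((e^u,∞))` for a.e. `u`. -/
theorem stmt_14 (σ : Measure ℝ) (hσsupp : σ (Set.Ioi (0 : ℝ))ᶜ = 0)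
    (hσfin : ∫⁻ r, ENNReal.ofReal (min (r ^ 2) 1) ∂σ < ⊤)
    (ℓ : ℝ → ℝ≥0∞) (hℓ : ∀ s : ℝ, ℓ s = ∫⁻ r in Set.Ioi s, ENNReal.ofReal r⁻¹ ∂σ)
    (h : ℝ → ℝ)
    (hh : ∀ u : ℝ, h u = Real.exp (-u) * (∫⁻ s in Set.Ioi (Real.exp u), ℓ s).toReal) :
    (∀ u : ℝ, ∫⁻ s in Set.Ioi (Real.exp u), ℓ s < ⊤) ∧
    (∀ u₁ u₂ : ℝ, u₁ ≤ u₂ →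
      h u₁ - h u₂ =
        ∫ u in Set.Ioc u₁ u₂, Real.exp (-u) * (σ (Set.Ioi (Real.exp u))).toReal) ∧
    (∀ᵐ u : ℝ, HasDerivAt h (-(Real.exp (-u) * (σ (Set.Ioi (Real.exp u))).toReal)) u) := by
  haveI : SigmaFinite (σ.restrict (Set.Ioi (0:ℝ))) := Stmt14Aux.sf_restrict σ hσfin
  have hG : ∀ u : ℝ, (∫⁻ s in Set.Ioi (Real.exp u), ℓ s) =
      ∫⁻ s in Set.Ioi (Real.exp u), ∫⁻ r in Set.Ioi s, ENNReal.ofReal r⁻¹ ∂σ :=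
    fun u => lintegral_congr fun s => hℓ s
  have hHrepr : ∀ u : ℝ, ENNReal.ofReal (Real.exp (-u)) * (∫⁻ s in Set.Ioi (Real.exp u), ℓ s)
      = Stmt14AuxD.Hf σ u := fun u => by
    rw [hG u]; exact Stmt14AuxB.H_repr σ u
  have hHfin : ∀ u : ℝ, Stmt14AuxD.Hf σ u < ⊤ := fun u => Stmt14AuxB.H_lt_top σ hσfin u
  have part1 : ∀ u : ℝ, (∫⁻ s in Set.Ioi (Real.exp u), ℓ s) < ⊤ := by
    intro u
    by_contra hcon
    rw [not_lt, top_le_iff] at hcon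
    have h2 := hHrepr u
    rw [hcon, ENNReal.mul_top (by simp [ENNReal.ofReal_eq_zero, not_le, Real.exp_pos])] at h2
    have h3 := hHfin u
    rw [← h2] at h3
    exact lt_irrefl _ h3
  have hhH : ∀ u : ℝ, h u = (Stmt14AuxD.Hf σ u).toReal := by
    intro u
    rw [hh u, ← hHrepr u, ENNReal.toReal_mul, ENNReal.toReal_ofReal (Real.exp_nonneg _)]
  have part2 : ∀ u₁ u₂ : ℝ, u₁ ≤ u₂ → h u₁ - h u₂ =
      ∫ u in Set.Ioc u₁ u₂, Real.exp (-u) * (σ (Set.Ioi (Real.exp u))).toReal := by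
    intro u₁ u₂ h12
    have h2 := Stmt14AuxD.intIoc σ hσfin h12
    simp only [Stmt14AuxD.gre] at h2
    rw [hhH u₁, hhH u₂, ← h2]
  refine ⟨part1, part2, ?_⟩
  have hFf0 : Stmt14AuxD.Ff σ 0 = 0 := by
    simp [Stmt14AuxD.Ff]
  have hFh : ∀ u : ℝ, h u = h 0 - Stmt14AuxD.Ff σ u := by
    intro u
    rcases le_total 0 u with hu | hu
    · have h2 := part2 0 u hu
      have h3 := Stmt14AuxD.Ff_Ioc σ hσfin hu
      simp only [Stmt14AuxD.gre] at h3
      rw [h3, hFf0] at h2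
      linarith
    · have h2 := part2 u 0 hu
      have h3 := Stmt14AuxD.Ff_Ioc σ hσfin hu
      simp only [Stmt14AuxD.gre] at h3
      rw [h3, hFf0] at h2
      linarith
  filter_upwards [Stmt14AuxE.hasDeriv_Ff σ hσfin] with x hdx
  have hfun : h = fun y => h 0 - Stmt14AuxD.Ff σ y := funext hFh
  rw [hfun]
  have hD := (hasDerivAt_const x (h 0)).sub hdx
  simpa [Stmt14AuxD.gre, Pi.sub_def] using hD
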